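/- If f is a continuously differentiable, strictly positive function on [a,b] with strictly positive derivative such that log∘f is convex on [a,b], then 1 - f(a)/f(b) ≤ (f'(b)·f(a)/(f(b)·f'(a)))·log(f(b)/f(a)) ≤ f'(b)/(e·f'(a)). -/

import Mathlib

lemma stmt12_arith (A B A' B' : ℝ) (hA : 0 < A) (hB : 0 < B) (hA' : 0 < A') (hB' : 0 < B')
    (hAB : A ≤ B) (key : A' / A ≤ B' / B) :
    1 - A / B ≤ (B' * A / (B * A')) * Real.log (B / A) ∧
      (B' * A / (B * A')) * Real.log (B / A) ≤ B' / (Real.exp 1 * A') := by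
  have hu : 1 ≤ B / A := (one_le_div hA).mpr hAB
  have ht0 : 0 ≤ Real.log (B / A) := Real.log_nonneg hu
  have hlogdiv : Real.log (B / A) = Real.log B - Real.log A := Real.log_div hB.ne' hA.ne'
  have hlogdiv' : Real.log (A / B) = Real.log A - Real.log B := Real.log_div hA.ne' hB.ne'
  have h1 : 1 - A / B ≤ Real.log (B / A) := by
    have := Real.log_le_sub_one_of_pos (div_pos hA hB)
    linarith
  have hc : 1 ≤ B' * A / (B * A') := by
    rw [le_div_iff₀ (by positivity)]
    rw [div_le_div_iff₀ hA hB] at key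
    linarith
  refine ⟨h1.trans (le_mul_of_one_le_left ht0 hc), ?_⟩
  have hlog2 : Real.log (B / A) ≤ (B / A) / Real.exp 1 := by
    have h := Real.log_le_sub_one_of_pos (show 0 < (B / A) / Real.exp 1 by positivity)
    have heq : Real.log ((B / A) / Real.exp 1) = Real.log (B / A) - 1 := by
      rw [Real.log_div (by positivity) (Real.exp_ne_zero 1), Real.log_exp]
    linarith
  have hL : Real.log (B / A) * (A * Real.exp 1) ≤ B := by
    rw [div_div] at hlog2
    exact (le_div_iff₀ (by positivity)).mp hlog2
  rw [div_mul_eq_mul_div, div_le_div_iff₀ (by positivity) (by positivity)]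
  nlinarith [mul_le_mul_of_nonneg_left hL (le_of_lt (mul_pos hB' hA')), Real.exp_pos 1]

theorem stmt12 (a b : ℝ) (hab : a < b)
    (f : ℝ → ℝ)
    (hf_smooth : ContDiffOn ℝ 1 f (Set.Icc a b))
    (hf_pos : ∀ x ∈ Set.Icc a b, 0 < f x)
    (hf'_pos : ∀ x ∈ Set.Icc a b, 0 < derivWithin f (Set.Icc a b) x)
    (hlog_conv : ConvexOn ℝ (Set.Icc a b) (fun x => Real.log (f x))) :
    1 - f a / f b ≤
        (derivWithin f (Set.Icc a b) b * f a / (f b * derivWithin f (Set.Icc a b) a)) *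
          Real.log (f b / f a) ∧
      (derivWithin f (Set.Icc a b) b * f a / (f b * derivWithin f (Set.Icc a b) a)) *
          Real.log (f b / f a) ≤
        derivWithin f (Set.Icc a b) b / (Real.exp 1 * derivWithin f (Set.Icc a b) a) := by
  have hmem_a : a ∈ Set.Icc a b := Set.left_mem_Icc.mpr hab.le
  have hmem_b : b ∈ Set.Icc a b := Set.right_mem_Icc.mpr hab.le
  have hA : 0 < f a := hf_pos a hmem_a
  have hB : 0 < f b := hf_pos b hmem_b
  have hA' : 0 < derivWithin f (Set.Icc a b) a := hf'_pos a hmem_a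
  have hB' : 0 < derivWithin f (Set.Icc a b) b := hf'_pos b hmem_b
  have hdiff : DifferentiableOn ℝ f (Set.Icc a b) := hf_smooth.differentiableOn one_ne_zero
  have hmono : StrictMonoOn f (Set.Icc a b) := by
    apply strictMonoOn_of_deriv_pos (convex_Icc a b) hdiff.continuousOn
    intro x hx
    rw [interior_Icc] at hx
    have hn : Set.Icc a b ∈ nhds x := Icc_mem_nhds hx.1 hx.2
    rw [← derivWithin_of_mem_nhds hn]
    exact hf'_pos x (Set.Ioo_subset_Icc_self hx)
  have hAB : f a < f b := hmono hmem_a hmem_b hab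
  have hga : HasDerivWithinAt (fun x => Real.log (f x))
      (derivWithin f (Set.Icc a b) a / f a) (Set.Icc a b) a :=
    ((hdiff a hmem_a).hasDerivWithinAt).log hA.ne'
  have hgb : HasDerivWithinAt (fun x => Real.log (f x))
      (derivWithin f (Set.Icc a b) b / f b) (Set.Icc a b) b :=
    ((hdiff b hmem_b).hasDerivWithinAt).log hB.ne'
  have key : derivWithin f (Set.Icc a b) a / f a ≤ derivWithin f (Set.Icc a b) b / f b :=
    le_trans (hlog_conv.le_slope_of_hasDerivWithinAt hmem_a hmem_b hab hga)
      (hlog_conv.slope_le_of_hasDerivWithinAt hmem_a hmem_b hab hgb)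
  exact stmt12_arith (f a) (f b) _ _ hA hB hA' hB' hAB.le key
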